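/- Given simulations f : S ⇒ T between automata S, T : X → Y with initial states and g : U ⇒ V between automata U, V : W → Z with initial states, the componentwise maps (v,w) ↦ (f(v), g(w)) on states and (e,e') ↦ (f(e), g(e')) on motions define a simulation f×g : S×U ⇒ T×V between the products (equipped with the pairs of initial states). -/

import Mathlib

/-- An automaton with boundary `S : X → Y`, where the action sets `X`, `Y`
have trivial (reflexive) actions `eX`, `eY`. -/
structure Aut (X Y : Type) (eX : X) (eY : Y) where
  State : Type
  Motion : Type
  src : Motion → State
  tgt : Motion → State
  refl : State → Motion
  refl_src : ∀ v, src (refl v) = v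
  refl_tgt : ∀ v, tgt (refl v) = v
  labL : Motion → X
  labR : Motion → Y
  labL_refl : ∀ v, labL (refl v) = eX
  labR_refl : ∀ v, labR (refl v) = eY

namespace Aut

variable {X Y Z W : Type} {eX : X} {eY : Y} {eZ : Z} {eW : W}

/-- The binding `S·T` of automata `S : X → Y` and `T : Y → Z`. -/
def bind (S : Aut X Y eX eY) (T : Aut Y Z eY eZ) : Aut X Z eX eZ where
  State := S.State × T.State
  Motion := {p : S.Motion × T.Motion // S.labR p.1 = T.labL p.2}
  src p := (S.src p.val.1, T.src p.val.2)
  tgt p := (S.tgt p.val.1, T.tgt p.val.2)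
  refl v := ⟨(S.refl v.1, T.refl v.2), by rw [S.labR_refl, T.labL_refl]⟩
  refl_src v := by simp [S.refl_src, T.refl_src]
  refl_tgt v := by simp [S.refl_tgt, T.refl_tgt]
  labL p := S.labL p.val.1
  labR p := T.labR p.val.2
  labL_refl v := S.labL_refl v.1
  labR_refl v := T.labR_refl v.2

/-- The product `S×T` of automata `S : X → Y` and `T : Z → W`. -/
def prod (S : Aut X Y eX eY) (T : Aut Z W eZ eW) :
    Aut (X × Z) (Y × W) (eX, eZ) (eY, eW) where
  State := S.State × T.State
  Motion := S.Motion × T.Motion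
  src p := (S.src p.1, T.src p.2)
  tgt p := (S.tgt p.1, T.tgt p.2)
  refl v := (S.refl v.1, T.refl v.2)
  refl_src v := by simp [S.refl_src, T.refl_src]
  refl_tgt v := by simp [S.refl_tgt, T.refl_tgt]
  labL p := (S.labL p.1, T.labL p.2)
  labR p := (S.labR p.1, T.labR p.2)
  labL_refl v := by simp [S.labL_refl, T.labL_refl]
  labR_refl v := by simp [S.labR_refl, T.labR_refl]

/-- The feedback `fb_Y S` of an automaton `S : X×Y → Y×Z`. -/
def fb (S : Aut (X × Y) (Y × Z) (eX, eY) (eY, eZ)) : Aut X Z eX eZ where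
  State := S.State
  Motion := {e : S.Motion // (S.labL e).2 = (S.labR e).1}
  src e := S.src e.val
  tgt e := S.tgt e.val
  refl v := ⟨S.refl v, by rw [S.labL_refl, S.labR_refl]⟩
  refl_src v := S.refl_src v
  refl_tgt v := S.refl_tgt v
  labL e := (S.labL e.val).1
  labR e := (S.labR e.val).2
  labL_refl v := by simp [S.labL_refl]
  labR_refl v := by simp [S.labR_refl]

/-- The identity automaton on an action set `X`. -/
def ident (X : Type) (eX : X) : Aut X X eX eX where
  State := PUnit
  Motion := X
  src _ := PUnit.unit
  tgt _ := PUnit.unit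
  refl _ := eX
  refl_src _ := rfl
  refl_tgt _ := rfl
  labL x := x
  labR x := x
  labL_refl _ := rfl
  labR_refl _ := rfl

end Aut

/-- `IsPath A v l w` : the list of motions `l` is a finite behaviour of `A`
from the state `v` ending at the state `w`. -/
def IsPath {X Y : Type} {eX : X} {eY : Y} (A : Aut X Y eX eY) :
    A.State → List A.Motion → A.State → Prop
  | v, [], w => v = w
  | v, e :: l, w => A.src e = v ∧ IsPath A (A.tgt e) l w

/-- `w` is reachable from `v`: there is a finite (possibly empty) behaviour from `v` to `w`. -/
def Reaches {X Y : Type} {eX : X} {eY : Y} (A : Aut X Y eX eY) (v w : A.State) : Prop :=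
  ∃ l, IsPath A v l w

/-- A state is a deadlock if the only motion out of it is the reflexive motion. -/
def Deadlock {X Y : Type} {eX : X} {eY : Y} (A : Aut X Y eX eY) (v : A.State) : Prop :=
  ∀ e, A.src e = v → e = A.refl v

/-- A behaviour (finite or infinite) of `A` from the state `v0`, encoded as a
finite-or-infinite sequence `Stream'.Seq` of motions. -/
def IsBehaviour {X Y : Type} {eX : X} {eY : Y} (A : Aut X Y eX eY) (v0 : A.State)
    (s : Stream'.Seq A.Motion) : Prop :=
  (∀ e, s.get? 0 = some e → A.src e = v0) ∧
  (∀ k e f, s.get? k = some e → s.get? (k + 1) = some f → A.src f = A.tgt e)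

/-- A comparison of automata: maps on states and motions preserving sources,
targets, reflexive motions and boundary labels. -/
structure Comparison {X Y : Type} {eX : X} {eY : Y} (S T : Aut X Y eX eY) where
  onState : S.State → T.State
  onMotion : S.Motion → T.Motion
  src_eq : ∀ e, T.src (onMotion e) = onState (S.src e)
  tgt_eq : ∀ e, T.tgt (onMotion e) = onState (S.tgt e)
  refl_eq : ∀ v, onMotion (S.refl v) = T.refl (onState v)
  labL_eq : ∀ e, T.labL (onMotion e) = S.labL e
  labR_eq : ∀ e, T.labR (onMotion e) = S.labR e

/-- An isomorphism of automata: bijections on states and motions preserving sources,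
targets, reflexive motions and boundary labels. -/
structure AutIso {X Y : Type} {eX : X} {eY : Y} (S T : Aut X Y eX eY) where
  stateEquiv : S.State ≃ T.State
  motionEquiv : S.Motion ≃ T.Motion
  src_eq : ∀ e, T.src (motionEquiv e) = stateEquiv (S.src e)
  tgt_eq : ∀ e, T.tgt (motionEquiv e) = stateEquiv (S.tgt e)
  refl_eq : ∀ v, motionEquiv (S.refl v) = T.refl (stateEquiv v)
  labL_eq : ∀ e, T.labL (motionEquiv e) = S.labL e
  labR_eq : ∀ e, T.labR (motionEquiv e) = S.labR e

/-- The reachable subautomaton `r(A)` of `A` with initial state `v0`. -/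
def reach {X Y : Type} {eX : X} {eY : Y} (A : Aut X Y eX eY) (v0 : A.State) :
    Aut X Y eX eY where
  State := {v : A.State // Reaches A v0 v}
  Motion := {e : A.Motion // Reaches A v0 (A.src e) ∧ Reaches A v0 (A.tgt e)}
  src e := ⟨A.src e.val, e.property.1⟩
  tgt e := ⟨A.tgt e.val, e.property.2⟩
  refl v := ⟨A.refl v.val, by rw [A.refl_src, A.refl_tgt]; exact ⟨v.property, v.property⟩⟩
  refl_src v := Subtype.ext (A.refl_src v.val)
  refl_tgt v := Subtype.ext (A.refl_tgt v.val)
  labL e := A.labL e.val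
  labR e := A.labR e.val
  labL_refl v := A.labL_refl v.val
  labR_refl v := A.labR_refl v.val

/-- The initial state of `A`, as a state of the reachable subautomaton `r(A)`. -/
def reachInit {X Y : Type} {eX : X} {eY : Y} (A : Aut X Y eX eY) (v0 : A.State) :
    (reach A v0).State :=
  ⟨v0, ⟨[], rfl⟩⟩

/-- A simulation `S ⇒ T` of automata with initial states: a comparison
`r(S) → r(T)` preserving the initial state and satisfying the lifting property. -/
structure Simulation {X Y : Type} {eX : X} {eY : Y} (S T : Aut X Y eX eY)
    (v0 : S.State) (w0 : T.State) where
  comp : Comparison (reach S v0) (reach T w0)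
  init : (comp.onState (reachInit S v0)).val = w0
  lift : ∀ (v : (reach S v0).State) (e : (reach T w0).Motion),
      (reach T w0).src e = comp.onState v →
      ∃ (l : List ((reach S v0).Motion)) (e' : (reach S v0).Motion)
        (v' : (reach S v0).State),
        IsPath (reach S v0) v (l ++ [e']) v' ∧
        (∀ m ∈ l, comp.onMotion m = (reach T w0).refl (comp.onState v)) ∧
        comp.onMotion e' = e

section SimProdHelpers

variable {X Y W Z : Type} {eX : X} {eY : Y} {eW : W} {eZ : Z}

theorem isPath_append' (A : Aut X Y eX eY) :
    ∀ (l l' : List A.Motion) (v w x : A.State),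
      IsPath A v l w → IsPath A w l' x → IsPath A v (l ++ l') x
  | [], l', v, w, x, h, h' => by
      have hvw : v = w := h
      subst hvw; exact h'
  | e :: l, l', v, w, x, h, h' =>
      ⟨h.1, isPath_append' A l l' _ w x h.2 h'⟩

theorem isPath_snoc' (A : Aut X Y eX eY) :
    ∀ (l : List A.Motion) (v : A.State) (e : A.Motion) (w : A.State),
      IsPath A v (l ++ [e]) w → IsPath A v l (A.src e) ∧ A.tgt e = w
  | [], v, e, w, h => ⟨(h.1).symm, h.2⟩
  | m :: l, v, e, w, h =>
      ⟨⟨h.1, (isPath_snoc' A l _ e w h.2).1⟩, (isPath_snoc' A l _ e w h.2).2⟩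

theorem isPath_prod_fst' (S : Aut X Y eX eY) (U : Aut W Z eW eZ) :
    ∀ (l : List (S.prod U).Motion) (v w : (S.prod U).State),
      IsPath (S.prod U) v l w → IsPath S v.1 (l.map Prod.fst) w.1
  | [], v, w, h => congrArg Prod.fst (show v = w from h)
  | e :: l, v, w, h =>
      ⟨congrArg Prod.fst (h.1 : (S.prod U).src e = v),
        isPath_prod_fst' S U l _ w h.2⟩

theorem isPath_prod_snd' (S : Aut X Y eX eY) (U : Aut W Z eW eZ) :
    ∀ (l : List (S.prod U).Motion) (v w : (S.prod U).State),
      IsPath (S.prod U) v l w → IsPath U v.2 (l.map Prod.snd) w.2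
  | [], v, w, h => congrArg Prod.snd (show v = w from h)
  | e :: l, v, w, h =>
      ⟨congrArg Prod.snd (h.1 : (S.prod U).src e = v),
        isPath_prod_snd' S U l _ w h.2⟩

theorem reaches_prod_fst' (S : Aut X Y eX eY) (U : Aut W Z eW eZ)
    {p q : (S.prod U).State} (h : Reaches (S.prod U) p q) : Reaches S p.1 q.1 := by
  obtain ⟨l, hl⟩ := h
  exact ⟨l.map Prod.fst, isPath_prod_fst' S U l p q hl⟩

theorem reaches_prod_snd' (S : Aut X Y eX eY) (U : Aut W Z eW eZ)
    {p q : (S.prod U).State} (h : Reaches (S.prod U) p q) : Reaches U p.2 q.2 := by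
  obtain ⟨l, hl⟩ := h
  exact ⟨l.map Prod.snd, isPath_prod_snd' S U l p q hl⟩

theorem isPath_prod_left' (S : Aut X Y eX eY) (U : Aut W Z eW eZ) :
    ∀ (l : List S.Motion) (v w : S.State) (u : U.State),
      IsPath S v l w →
      IsPath (S.prod U) (v, u) (l.map fun m => (m, U.refl u)) (w, u)
  | [], v, w, u, h => congrArg (fun a => (a, u)) (show v = w from h)
  | e :: l, v, w, u, h => by
      refine ⟨?_, ?_⟩
      · show (S.src e, U.src (U.refl u)) = (v, u)
        rw [(h.1 : S.src e = v), U.refl_src]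
      · show IsPath (S.prod U) (S.tgt e, U.tgt (U.refl u)) _ _
        rw [U.refl_tgt]
        exact isPath_prod_left' S U l _ w u h.2

theorem isPath_prod_right' (S : Aut X Y eX eY) (U : Aut W Z eW eZ) :
    ∀ (l : List U.Motion) (v w : U.State) (u : S.State),
      IsPath U v l w →
      IsPath (S.prod U) (u, v) (l.map fun m => (S.refl u, m)) (u, w)
  | [], v, w, u, h => congrArg (fun a => (u, a)) (show v = w from h)
  | e :: l, v, w, u, h => by
      refine ⟨?_, ?_⟩
      · show (S.src (S.refl u), U.src e) = (u, v)
        rw [(h.1 : U.src e = v), S.refl_src]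
      · show IsPath (S.prod U) (S.tgt (S.refl u), U.tgt e) _ _
        rw [S.refl_tgt]
        exact isPath_prod_right' S U l _ w u h.2

theorem reaches_prod_mk' (S : Aut X Y eX eY) (U : Aut W Z eW eZ)
    {v a : S.State} {u b : U.State} (h1 : Reaches S v a) (h2 : Reaches U u b) :
    Reaches (S.prod U) (v, u) (a, b) := by
  obtain ⟨l1, hl1⟩ := h1
  obtain ⟨l2, hl2⟩ := h2
  exact ⟨_, isPath_append' (S.prod U) _ _ (v, u) (a, u) (a, b)
    (isPath_prod_left' S U l1 v a u hl1) (isPath_prod_right' S U l2 u b a hl2)⟩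

theorem isPath_reach_of' (A : Aut X Y eX eY) (v0 : A.State) :
    ∀ (l : List (reach A v0).Motion) (v w : (reach A v0).State),
      IsPath A v.val (l.map Subtype.val) w.val → IsPath (reach A v0) v l w
  | [], v, w, h => Subtype.ext (show v.val = w.val from h)
  | e :: l, v, w, h =>
      ⟨Subtype.ext (h.1 : A.src e.val = v.val),
        isPath_reach_of' A v0 l _ w h.2⟩

theorem isPath_reach_val' (A : Aut X Y eX eY) (v0 : A.State) :
    ∀ (l : List (reach A v0).Motion) (v w : (reach A v0).State),
      IsPath (reach A v0) v l w → IsPath A v.val (l.map Subtype.val) w.val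
  | [], v, w, h => congrArg Subtype.val (show v = w from h)
  | e :: l, v, w, h =>
      ⟨congrArg Subtype.val (h.1 : (reach A v0).src e = v),
        isPath_reach_val' A v0 l _ w h.2⟩

def mkLeftMotion {X Y W Z : Type} {eX : X} {eY : Y} {eW : W} {eZ : Z}
    (S : Aut X Y eX eY) (U : Aut W Z eW eZ) (v0 : S.State) (u0 : U.State)
    (u : U.State) (hu : Reaches U u0 u) (m : (reach S v0).Motion) :
    (reach (S.prod U) (v0, u0)).Motion :=
  ⟨(m.val, U.refl u),
    by show Reaches (S.prod U) (v0, u0) (S.src m.val, U.src (U.refl u))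
       rw [U.refl_src]; exact reaches_prod_mk' S U m.property.1 hu,
    by show Reaches (S.prod U) (v0, u0) (S.tgt m.val, U.tgt (U.refl u))
       rw [U.refl_tgt]; exact reaches_prod_mk' S U m.property.2 hu⟩

def mkRightMotion {X Y W Z : Type} {eX : X} {eY : Y} {eW : W} {eZ : Z}
    (S : Aut X Y eX eY) (U : Aut W Z eW eZ) (v0 : S.State) (u0 : U.State)
    (s : S.State) (hs : Reaches S v0 s) (m : (reach U u0).Motion) :
    (reach (S.prod U) (v0, u0)).Motion :=
  ⟨(S.refl s, m.val),
    by show Reaches (S.prod U) (v0, u0) (S.src (S.refl s), U.src m.val)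
       rw [S.refl_src]; exact reaches_prod_mk' S U hs m.property.1,
    by show Reaches (S.prod U) (v0, u0) (S.tgt (S.refl s), U.tgt m.val)
       rw [S.refl_tgt]; exact reaches_prod_mk' S U hs m.property.2⟩

def mkPairMotion {X Y W Z : Type} {eX : X} {eY : Y} {eW : W} {eZ : Z}
    (S : Aut X Y eX eY) (U : Aut W Z eW eZ) (v0 : S.State) (u0 : U.State)
    (e1 : (reach S v0).Motion) (e2 : (reach U u0).Motion) :
    (reach (S.prod U) (v0, u0)).Motion :=
  ⟨(e1.val, e2.val),
    reaches_prod_mk' S U e1.property.1 e2.property.1,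
    reaches_prod_mk' S U e1.property.2 e2.property.2⟩

def simProdComp {X Y W Z : Type} {eX : X} {eY : Y} {eW : W} {eZ : Z}
    {S T : Aut X Y eX eY} {U V : Aut W Z eW eZ}
    {v0 : S.State} {w0 : T.State} {u0 : U.State} {x0 : V.State}
    (f : Simulation S T v0 w0) (g : Simulation U V u0 x0) :
    Comparison (reach (S.prod U) (v0, u0)) (reach (T.prod V) (w0, x0)) where
  onState q :=
    ⟨((f.comp.onState ⟨q.val.1, reaches_prod_fst' S U q.property⟩).val,
      (g.comp.onState ⟨q.val.2, reaches_prod_snd' S U q.property⟩).val),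
      reaches_prod_mk' T V
        (f.comp.onState ⟨q.val.1, reaches_prod_fst' S U q.property⟩).property
        (g.comp.onState ⟨q.val.2, reaches_prod_snd' S U q.property⟩).property⟩
  onMotion m :=
    ⟨((f.comp.onMotion ⟨m.val.1, reaches_prod_fst' S U m.property.1,
          reaches_prod_fst' S U m.property.2⟩).val,
      (g.comp.onMotion ⟨m.val.2, reaches_prod_snd' S U m.property.1,
          reaches_prod_snd' S U m.property.2⟩).val),
      ⟨reaches_prod_mk' T V
        (f.comp.onMotion ⟨m.val.1, reaches_prod_fst' S U m.property.1,
          reaches_prod_fst' S U m.property.2⟩).property.1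
        (g.comp.onMotion ⟨m.val.2, reaches_prod_snd' S U m.property.1,
          reaches_prod_snd' S U m.property.2⟩).property.1,
       reaches_prod_mk' T V
        (f.comp.onMotion ⟨m.val.1, reaches_prod_fst' S U m.property.1,
          reaches_prod_fst' S U m.property.2⟩).property.2
        (g.comp.onMotion ⟨m.val.2, reaches_prod_snd' S U m.property.1,
          reaches_prod_snd' S U m.property.2⟩).property.2⟩⟩
  src_eq e := by
    apply Subtype.ext
    exact Prod.ext
      (congrArg Subtype.val (f.comp.src_eq ⟨e.val.1,
        reaches_prod_fst' S U e.property.1, reaches_prod_fst' S U e.property.2⟩))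
      (congrArg Subtype.val (g.comp.src_eq ⟨e.val.2,
        reaches_prod_snd' S U e.property.1, reaches_prod_snd' S U e.property.2⟩))
  tgt_eq e := by
    apply Subtype.ext
    exact Prod.ext
      (congrArg Subtype.val (f.comp.tgt_eq ⟨e.val.1,
        reaches_prod_fst' S U e.property.1, reaches_prod_fst' S U e.property.2⟩))
      (congrArg Subtype.val (g.comp.tgt_eq ⟨e.val.2,
        reaches_prod_snd' S U e.property.1, reaches_prod_snd' S U e.property.2⟩))
  refl_eq v := by
    apply Subtype.ext
    exact Prod.ext
      (congrArg Subtype.val (f.comp.refl_eq ⟨v.val.1, reaches_prod_fst' S U v.property⟩))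
      (congrArg Subtype.val (g.comp.refl_eq ⟨v.val.2, reaches_prod_snd' S U v.property⟩))
  labL_eq e :=
    Prod.ext
      (f.comp.labL_eq ⟨e.val.1,
        reaches_prod_fst' S U e.property.1, reaches_prod_fst' S U e.property.2⟩)
      (g.comp.labL_eq ⟨e.val.2,
        reaches_prod_snd' S U e.property.1, reaches_prod_snd' S U e.property.2⟩)
  labR_eq e :=
    Prod.ext
      (f.comp.labR_eq ⟨e.val.1,
        reaches_prod_fst' S U e.property.1, reaches_prod_fst' S U e.property.2⟩)
      (g.comp.labR_eq ⟨e.val.2,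
        reaches_prod_snd' S U e.property.1, reaches_prod_snd' S U e.property.2⟩)

def simProdSim {X Y W Z : Type} {eX : X} {eY : Y} {eW : W} {eZ : Z}
    {S T : Aut X Y eX eY} {U V : Aut W Z eW eZ}
    {v0 : S.State} {w0 : T.State} {u0 : U.State} {x0 : V.State}
    (f : Simulation S T v0 w0) (g : Simulation U V u0 x0) :
    Simulation (S.prod U) (T.prod V) (v0, u0) (w0, x0) where
  comp := simProdComp f g
  init := Prod.ext f.init g.init
  lift := by
    intro q E hsrc
    have hq1 : Reaches S v0 q.val.1 := reaches_prod_fst' S U q.property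
    have hq2 : Reaches U u0 q.val.2 := reaches_prod_snd' S U q.property
    set q1 : (reach S v0).State := ⟨q.val.1, hq1⟩ with hq1def
    set q2 : (reach U u0).State := ⟨q.val.2, hq2⟩ with hq2def
    set E1 : (reach T w0).Motion :=
      ⟨E.val.1, reaches_prod_fst' T V E.property.1, reaches_prod_fst' T V E.property.2⟩
      with hE1def
    set E2 : (reach V x0).Motion :=
      ⟨E.val.2, reaches_prod_snd' T V E.property.1, reaches_prod_snd' T V E.property.2⟩
      with hE2def
    have hsrc1 : (reach T w0).src E1 = f.comp.onState q1 :=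
      Subtype.ext (congrArg (fun r => r.val.1) hsrc)
    have hsrc2 : (reach V x0).src E2 = g.comp.onState q2 :=
      Subtype.ext (congrArg (fun r => r.val.2) hsrc)
    obtain ⟨l1, e1, v1, hpath1, hsil1, he1⟩ := f.lift q1 E1 hsrc1
    obtain ⟨l2, e2, u2, hpath2, hsil2, he2⟩ := g.lift q2 E2 hsrc2
    have p1 := isPath_reach_val' S v0 _ _ _ hpath1
    have p2 := isPath_reach_val' U u0 _ _ _ hpath2
    erw [List.map_append, List.map_cons, List.map_nil] at p1 p2
    obtain ⟨p1a, p1b⟩ := isPath_snoc' S _ _ _ _ p1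
    obtain ⟨p2a, p2b⟩ := isPath_snoc' U _ _ _ _ p2
    -- ambient product paths
    have amb1 : IsPath (S.prod U) (q.val.1, q.val.2)
        ((l1.map Subtype.val).map fun m => (m, U.refl q.val.2)) (S.src e1.val, q.val.2) :=
      isPath_prod_left' S U _ _ _ _ p1a
    have amb2 : IsPath (S.prod U) (S.src e1.val, q.val.2)
        ((l2.map Subtype.val).map fun m => (S.refl (S.src e1.val), m))
        (S.src e1.val, U.src e2.val) :=
      isPath_prod_right' S U _ _ _ _ p2a
    have amb3 : IsPath (S.prod U) (S.src e1.val, U.src e2.val)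
        [(e1.val, e2.val)] (v1.val, u2.val) := by
      refine ⟨rfl, ?_⟩
      show (S.tgt e1.val, U.tgt e2.val) = (v1.val, u2.val)
      rw [p1b, p2b]
    have full := isPath_append' (S.prod U) _ _ _ _ _ amb1
      (isPath_append' (S.prod U) _ _ _ _ _ amb2 amb3)
    -- the lifted data
    let L1 : List ((reach (S.prod U) (v0, u0)).Motion) :=
      l1.map (mkLeftMotion S U v0 u0 q.val.2 hq2)
    let L2 : List ((reach (S.prod U) (v0, u0)).Motion) :=
      l2.map (mkRightMotion S U v0 u0 (S.src e1.val) e1.property.1)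
    refine ⟨L1 ++ L2, mkPairMotion S U v0 u0 e1 e2,
      ⟨(v1.val, u2.val), reaches_prod_mk' S U v1.property u2.property⟩,
      ?_, ?_, ?_⟩
    · apply isPath_reach_of'
      show IsPath (S.prod U) (q.val.1, q.val.2) _ (v1.val, u2.val)
      have hmap : ((L1 ++ L2) ++ [mkPairMotion S U v0 u0 e1 e2]).map Subtype.val
          = ((l1.map Subtype.val).map fun m => (m, U.refl q.val.2)) ++
            (((l2.map Subtype.val).map fun m => (S.refl (S.src e1.val), m)) ++
              [(e1.val, e2.val)]) := by
        unfold L1 L2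
        simp only [List.map_append, List.map_map, List.map_cons, List.map_nil,
          List.append_assoc]
        erw [List.map_append, List.map_append, List.map_map, List.map_map, List.map_map,
          List.map_map]
        rfl
      rw [hmap]
      exact full
    · intro m hm
      rcases List.mem_append.1 hm with hmem | hmem
      · obtain ⟨m0, hm0, rfl⟩ := List.mem_map.1 hmem
        apply Subtype.ext
        show ((f.comp.onMotion m0).val,
            (g.comp.onMotion ((reach U u0).refl q2)).val)
          = (T.refl (f.comp.onState q1).val, V.refl (g.comp.onState q2).val)
        rw [hsil1 m0 hm0, g.comp.refl_eq q2]
        rfl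
      · obtain ⟨m0, hm0, rfl⟩ := List.mem_map.1 hmem
        have hkey : f.comp.onState ((reach S v0).src e1) = f.comp.onState q1 := by
          rw [← f.comp.src_eq e1, he1]; exact hsrc1
        apply Subtype.ext
        show ((f.comp.onMotion ((reach S v0).refl ((reach S v0).src e1))).val,
            (g.comp.onMotion m0).val)
          = (T.refl (f.comp.onState q1).val, V.refl (g.comp.onState q2).val)
        rw [f.comp.refl_eq ((reach S v0).src e1), hkey, hsil2 m0 hm0]
        rfl
    · apply Subtype.ext
      show ((f.comp.onMotion e1).val, (g.comp.onMotion e2).val) = E.val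
      rw [he1, he2]
      rfl

end SimProdHelpers

/-- The componentwise maps of simulations `f : S ⇒ T` and `g : U ⇒ V`
define a simulation `f×g : S×U ⇒ T×V` between the products, equipped with the pairs of
initial states. -/
theorem simulation_prod {X Y W Z : Type} {eX : X} {eY : Y} {eW : W} {eZ : Z}
    (S T : Aut X Y eX eY) (U V : Aut W Z eW eZ)
    (v0 : S.State) (w0 : T.State) (u0 : U.State) (x0 : V.State)
    (f : Simulation S T v0 w0) (g : Simulation U V u0 x0) :
    ∃ h : Simulation (S.prod U) (T.prod V) (v0, u0) (w0, x0),
      (∀ (q : (reach (S.prod U) (v0, u0)).State)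
        (h1 : Reaches S v0 q.val.1) (h2 : Reaches U u0 q.val.2),
        (h.comp.onState q).val =
          ((f.comp.onState ⟨q.val.1, h1⟩).val, (g.comp.onState ⟨q.val.2, h2⟩).val)) ∧
      (∀ (m : (reach (S.prod U) (v0, u0)).Motion)
        (h1 : Reaches S v0 (S.src m.val.1) ∧ Reaches S v0 (S.tgt m.val.1))
        (h2 : Reaches U u0 (U.src m.val.2) ∧ Reaches U u0 (U.tgt m.val.2)),
        (h.comp.onMotion m).val =
          ((f.comp.onMotion ⟨m.val.1, h1⟩).val, (g.comp.onMotion ⟨m.val.2, h2⟩).val)) :=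
  ⟨simProdSim f g, fun _ _ _ => rfl, fun _ _ _ => rfl⟩
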